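/- The Lommel polynomial R_{n,ν}(x) = ∑_{k=0}^{⌊n/2⌋} (−1)^k C(n−k,k) (Γ(ν+n−k)/Γ(ν+k)) (2/x)^{n−2k} satisfies the identity R_{n,ν}(x) = (2/x)^n (Γ(ν+n)/Γ(ν)) · 𝔉({x/(2(ν+k))}_{k=0}^{n−1}) for all n ≥ 0, ν ∈ ℂ with −ν ∉ ℤ_{≥0}, and x ≠ 0. -/

import Mathlib

open scoped BigOperators

/-- Admissible index tuples: k₁ ≥ 1 and k_{i+1} ≥ k_i + 2. -/
def FAdm (m : ℕ) (k : Fin m → ℕ) : Prop :=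
  (∀ i, 1 ≤ k i) ∧ ∀ i j : Fin m, (i : ℕ) + 1 = (j : ℕ) → k i + 2 ≤ k j

/-- The function 𝔉 given by the alternating multiple series
`𝔉(x) = 1 + ∑_{m≥1} (-1)^m ∑_{k₁≥1, k_{i+1}≥k_i+2} x_{k₁}x_{k₁+1}⋯x_{k_m}x_{k_m+1}`;
the sequence is indexed so that `x k` is `x_k` for `k ≥ 1`. -/
noncomputable def Fcal (x : ℕ → ℂ) : ℂ :=
  ∑' p : (Σ m : ℕ, { k : Fin m → ℕ // FAdm m k }),
    (-1 : ℂ) ^ p.1 * ∏ i, x (p.2.1 i) * x (p.2.1 i + 1)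

/-- 𝔉 of the finite sequence (x_1, …, x_n): x truncated after position n, padded by zeros. -/
noncomputable def FcalFin (n : ℕ) (x : ℕ → ℂ) : ℂ :=
  Fcal fun k => if k ≤ n then x k else 0

-- auxiliary
abbrev Tup := Σ m : ℕ, { k : Fin m → ℕ // FAdm m k }

noncomputable def tmC (y : ℕ → ℂ) (p : Tup) : ℂ :=
  (-1 : ℂ) ^ p.1 * ∏ i, y (p.2.1 i) * y (p.2.1 i + 1)

lemma Fcal_eq_tsum (y : ℕ → ℂ) : Fcal y = ∑' p : Tup, tmC y p := rfl

lemma fadm_zero (k : Fin 0 → ℕ) : FAdm 0 k :=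
  ⟨fun i => i.elim0, fun i => i.elim0⟩

def trivTup : Tup := ⟨0, fun i => i.elim0, fadm_zero _⟩

lemma tup_ext {m : ℕ} {k k' : Fin m → ℕ} {h : FAdm m k} {h' : FAdm m k'}
    (hk : k = k') : (⟨m, k, h⟩ : Tup) = ⟨m, k', h'⟩ := by subst hk; rfl

lemma eq_trivTup {k : Fin 0 → ℕ} {h : FAdm 0 k} : (⟨0, k, h⟩ : Tup) = trivTup :=
  tup_ext (funext fun i => i.elim0)

lemma FAdm_mono {m : ℕ} {k : Fin m → ℕ} (h : FAdm m k) {i j : Fin m}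
    (hij : (i : ℕ) < j) : k i + 2 * ((j : ℕ) - (i : ℕ)) ≤ k j := by
  obtain ⟨d, hd⟩ : ∃ d, (j : ℕ) = (i : ℕ) + d + 1 := ⟨(j : ℕ) - (i : ℕ) - 1, by omega⟩
  induction d generalizing j with
  | zero => have := h.2 i j (by omega); omega
  | succ d ih =>
    have hj' : (i : ℕ) + d + 1 < m := by omega
    have h1 := ih (j := ⟨(i : ℕ) + d + 1, hj'⟩) (by simp) (by simp)
    have h2 := h.2 ⟨(i : ℕ) + d + 1, hj'⟩ j (by simp; omega)
    simp at h1
    omega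

def bddT (n : ℕ) (p : Tup) : Prop := ∀ i, p.2.1 i + 1 ≤ n

instance (m : ℕ) (k : Fin m → ℕ) : Decidable (FAdm m k) :=
  decidable_of_iff ((∀ i, 1 ≤ k i) ∧ ∀ i j : Fin m, (i : ℕ) + 1 = (j : ℕ) → k i + 2 ≤ k j)
    Iff.rfl

noncomputable def encT (n : ℕ) (c : Σ m : Fin (n + 1), (Fin (m : ℕ) → Fin n)) : Tup :=
  if h : FAdm (c.1 : ℕ) (fun i => (c.2 i : ℕ)) then ⟨(c.1 : ℕ), fun i => (c.2 i : ℕ), h⟩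
  else trivTup

noncomputable def Sfin (n : ℕ) : Finset Tup :=
  Finset.image (encT n) Finset.univ

lemma bddT_trivTup (n : ℕ) : bddT n trivTup := fun i => i.elim0

lemma mem_Sfin {n : ℕ} {p : Tup} : p ∈ Sfin n ↔ bddT n p := by
  classical
  constructor
  · intro hp
    rw [Sfin] at hp
    obtain ⟨c, -, rfl⟩ := Finset.mem_image.mp hp
    rw [encT]
    split
    · intro i; exact Nat.succ_le_of_lt (c.2 i).2
    · exact bddT_trivTup n
  · intro hp
    obtain ⟨m, k, hk⟩ := p
    have hp' : ∀ i : Fin m, k i + 1 ≤ n := fun i => hp i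
    have hki : ∀ i : Fin m, (k i : ℕ) < n := fun i => by have := hp' i; omega
    have hm : m < n + 1 := by
      rcases Nat.eq_zero_or_pos m with hm0 | hm0
      · omega
      · rcases Nat.lt_or_ge m 2 with hm1 | hm1
        · have := hp' ⟨0, hm0⟩; have := hk.1 ⟨0, hm0⟩; omega
        · have hlt : (((⟨0, hm0⟩ : Fin m)) : ℕ) < ((⟨m - 1, by omega⟩ : Fin m) : ℕ) := by
            simp; omega
          have h2 : k ⟨0, hm0⟩ + 2 * ((m - 1) - 0) ≤ k ⟨m - 1, by omega⟩ :=
            FAdm_mono hk hlt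
          have h3 := hp' ⟨m - 1, by omega⟩
          have h4 := hk.1 ⟨0, hm0⟩
          omega
    rw [Sfin]
    refine Finset.mem_image.mpr ⟨⟨⟨m, hm⟩, fun i => ⟨k i, hki i⟩⟩, Finset.mem_univ _, ?_⟩
    rw [encT]
    have hcond : FAdm m (fun i : Fin m => ((⟨k i, hki i⟩ : Fin n) : ℕ)) := by
      simpa using hk
    rw [dif_pos hcond]

lemma tmC_eq_zero {n : ℕ} {y : ℕ → ℂ} (hy : ∀ j, n < j → y j = 0) {p : Tup}
    (hp : ¬ bddT n p) : tmC y p = 0 := by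
  rw [bddT] at hp
  push_neg at hp
  obtain ⟨i, hi⟩ := hp
  have : y (p.2.1 i + 1) = 0 := hy _ (by omega)
  rw [tmC, Finset.prod_eq_zero (Finset.mem_univ i) (by rw [this, mul_zero]), mul_zero]

lemma Fcal_eq_sum {n : ℕ} {y : ℕ → ℂ} (hy : ∀ j, n < j → y j = 0) :
    Fcal y = ∑ p ∈ Sfin n, tmC y p := by
  rw [Fcal_eq_tsum]
  exact tsum_eq_sum fun p hp => tmC_eq_zero hy (fun hb => hp (mem_Sfin.mpr hb))

lemma tmC_trivTup (y : ℕ → ℂ) : tmC y trivTup = 1 := by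
  simp [tmC, trivTup]
  exact Fintype.prod_empty _

lemma Fcal_small {N : ℕ} (hN : N ≤ 1) (y : ℕ → ℂ) (hy : ∀ j, N < j → y j = 0) :
    Fcal y = 1 := by
  rw [Fcal_eq_tsum]
  rw [tsum_eq_single trivTup ?_, tmC_trivTup]
  intro p hp
  obtain ⟨m, k, hk⟩ := p
  rcases Nat.eq_zero_or_pos m with rfl | hm
  · exact absurd eq_trivTup hp
  · have h1 : 1 ≤ k ⟨0, hm⟩ := hk.1 _
    have : y (k ⟨0, hm⟩ + 1) = 0 := hy _ (by omega)
    rw [tmC, Finset.prod_eq_zero (Finset.mem_univ ⟨0, hm⟩) (by rw [this, mul_zero]), mul_zero]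

lemma FcalFin_zero (x : ℕ → ℂ) : FcalFin 0 x = 1 := by
  rw [FcalFin]
  exact Fcal_small le_rfl _ (fun j hj => by simp [Nat.not_le.mpr, hj]; omega)

lemma FcalFin_one (x : ℕ → ℂ) : FcalFin 1 x = 1 := by
  rw [FcalFin]
  exact Fcal_small le_rfl _ (fun j hj => by simp; omega)

noncomputable def dropT : Tup → Tup
  | ⟨0, q⟩ => ⟨0, q⟩
  | ⟨m+1, k, h⟩ => ⟨m, fun i => k i.castSucc,
      ⟨fun i => h.1 _, fun i j hij => h.2 i.castSucc j.castSucc (by simpa using hij)⟩⟩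

lemma dropT_succ {m : ℕ} (k : Fin (m+1) → ℕ) (h : FAdm (m+1) k) :
    dropT ⟨m+1, k, h⟩ = ⟨m, fun i => k i.castSucc,
      ⟨fun i => h.1 _, fun i j hij => h.2 i.castSucc j.castSucc (by simpa using hij)⟩⟩ := rfl

noncomputable def snocT (v : ℕ) (p : Tup) : Tup :=
  if h : FAdm (p.1 + 1) (Fin.snoc p.2.1 v) then ⟨p.1 + 1, Fin.snoc p.2.1 v, h⟩ else p

lemma snoc_adm {m : ℕ} {k : Fin m → ℕ} (h : FAdm m k) {n : ℕ}
    (hb : ∀ i, k i + 1 ≤ n) : FAdm (m + 1) (Fin.snoc k (n + 1) : Fin (m+1) → ℕ) := by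
  constructor
  · intro i
    rcases lt_or_ge (i : ℕ) m with hi | hi
    · have hi' : i = Fin.castSucc ⟨i, hi⟩ := by ext; simp
      rw [hi', Fin.snoc_castSucc]; exact h.1 _
    · have hi' : i = Fin.last m := by ext; simp; omega
      rw [hi', Fin.snoc_last]; omega
  · intro i j hij
    rcases lt_or_ge (j : ℕ) m with hj | hj
    · have hi : (i : ℕ) < m := by omega
      have hi' : i = Fin.castSucc ⟨i, hi⟩ := by ext; simp
      have hj' : j = Fin.castSucc ⟨j, hj⟩ := by ext; simp
      rw [hi', hj', Fin.snoc_castSucc, Fin.snoc_castSucc]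
      exact h.2 _ _ (by simpa using hij)
    · have hjm : (j : ℕ) = m := by have := j.isLt; omega
      have hi : (i : ℕ) < m := by omega
      have hi' : i = Fin.castSucc ⟨i, hi⟩ := by ext; simp
      have hj' : j = Fin.last m := by ext; simp; omega
      rw [hi', hj', Fin.snoc_castSucc, Fin.snoc_last]
      have := hb ⟨i, hi⟩
      omega

lemma top_struct {n : ℕ} {p : Tup} (h2 : bddT (n+2) p) (h1 : ¬ bddT (n+1) p) :
    ∃ (m : ℕ) (k : Fin (m+1) → ℕ) (hk : FAdm (m+1) k),
      p = ⟨m+1, k, hk⟩ ∧ k (Fin.last m) = n + 1 ∧ ∀ i : Fin m, k i.castSucc + 1 ≤ n := by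
  obtain ⟨M, k, hk⟩ := p
  rw [bddT] at h1; push_neg at h1
  obtain ⟨i, hi⟩ := h1
  cases M with
  | zero => exact i.elim0
  | succ m =>
    have h2' : ∀ i : Fin (m+1), k i + 1 ≤ n + 2 := fun i => h2 i
    have hi' : n + 1 < k i + 1 := hi
    have hin : k i = n + 1 := by have := h2' i; omega
    have him : (i : ℕ) < m + 1 := i.isLt
    have hil : (i : ℕ) = m := by
      by_contra hne
      have hlt : (i : ℕ) < ((Fin.last m : Fin (m+1)) : ℕ) := by
        simp; omega
      have hmono := FAdm_mono hk hlt
      have hlast := h2' (Fin.last m)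
      have hc2 : ((Fin.last m : Fin (m+1)) : ℕ) = m := by simp
      omega
    have hieq : i = Fin.last m :=
      Fin.ext (show (i : ℕ) = ((Fin.last m : Fin (m+1)) : ℕ) by simpa using hil)
    refine ⟨m, k, hk, rfl, by rw [← hieq]; exact hin, ?_⟩
    intro i'
    have hlt : ((Fin.castSucc i' : Fin (m+1)) : ℕ) < ((Fin.last m : Fin (m+1)) : ℕ) := by
      simp
    have hmono := FAdm_mono hk hlt
    have hc1 : ((Fin.castSucc i' : Fin (m+1)) : ℕ) = (i' : ℕ) := by simp
    have hc2 : ((Fin.last m : Fin (m+1)) : ℕ) = m := by simp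
    have hkl : k (Fin.last m) = n + 1 := by rw [hieq] at hin; exact hin
    have hi'lt := i'.isLt
    omega

lemma FcalFin_rec (n : ℕ) (x : ℕ → ℂ) :
    FcalFin (n+2) x = FcalFin (n+1) x - x (n+1) * x (n+2) * FcalFin n x := by
  classical
  set y2 : ℕ → ℂ := fun k => if k ≤ n+2 then x k else 0 with hy2
  set y1 : ℕ → ℂ := fun k => if k ≤ n+1 then x k else 0 with hy1
  set y0 : ℕ → ℂ := fun k => if k ≤ n then x k else 0 with hy0
  have hv2 : ∀ j, n+2 < j → y2 j = 0 := fun j hj => if_neg (by omega)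
  have hv1 : ∀ j, n+1 < j → y1 j = 0 := fun j hj => if_neg (by omega)
  have hv0 : ∀ j, n < j → y0 j = 0 := fun j hj => if_neg (by omega)
  have h21 : ∀ j, j ≤ n+1 → y2 j = y1 j := fun j hj => by
    show (if j ≤ n+2 then x j else 0) = (if j ≤ n+1 then x j else 0)
    rw [if_pos (by omega), if_pos hj]
  have h20 : ∀ j, j ≤ n → y2 j = y0 j := fun j hj => by
    show (if j ≤ n+2 then x j else 0) = (if j ≤ n then x j else 0)
    rw [if_pos (by omega), if_pos hj]
  have e2 : FcalFin (n+2) x = ∑ p ∈ Sfin (n+2), tmC y2 p := Fcal_eq_sum hv2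
  rw [e2, ← Finset.sum_filter_add_sum_filter_not (Sfin (n+2)) (fun p => bddT (n+1) p)]
  have part1 : ∑ p ∈ (Sfin (n+2)).filter (fun p => bddT (n+1) p), tmC y2 p
      = FcalFin (n+1) x := by
    have step : ∀ p ∈ (Sfin (n+2)).filter (fun p => bddT (n+1) p), tmC y2 p = tmC y1 p := by
      intro p hp
      have hb : bddT (n+1) p := (Finset.mem_filter.mp hp).2
      unfold tmC
      congr 1
      refine Finset.prod_congr rfl (fun i _ => ?_)
      have hbi := hb i
      rw [h21 _ (by omega), h21 _ (by omega)]
    rw [Finset.sum_congr rfl step]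
    rw [FcalFin, Fcal_eq_tsum]
    symm
    apply tsum_eq_sum
    intro p hp
    by_cases hb : bddT (n+1) p
    · exact absurd (Finset.mem_filter.mpr
        ⟨mem_Sfin.mpr (fun i => by have := hb i; omega), hb⟩) hp
    · exact tmC_eq_zero hv1 hb
  have hsum0 : FcalFin n x = ∑ p ∈ (Sfin (n+2)).filter (fun p => bddT n p), tmC y0 p := by
    rw [FcalFin, Fcal_eq_tsum]
    apply tsum_eq_sum
    intro p hp
    by_cases hb : bddT n p
    · exact absurd (Finset.mem_filter.mpr
        ⟨mem_Sfin.mpr (fun i => by have := hb i; omega), hb⟩) hp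
    · exact tmC_eq_zero hv0 hb
  have part2 : ∑ p ∈ (Sfin (n+2)).filter (fun p => ¬ bddT (n+1) p), tmC y2 p
      = -(x (n+1) * x (n+2) * FcalFin n x) := by
    rw [hsum0, Finset.mul_sum, ← Finset.sum_neg_distrib]
    apply Finset.sum_nbij' dropT (snocT (n+1))
    · -- maps into t
      intro p hp
      obtain ⟨hmem, hnb⟩ := Finset.mem_filter.mp hp
      obtain ⟨m, k, hk, rfl, hlast, hbelow⟩ := top_struct (mem_Sfin.mp hmem) hnb
      rw [dropT_succ]
      refine Finset.mem_filter.mpr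
        ⟨mem_Sfin.mpr (fun i => show k i.castSucc + 1 ≤ n + 2 by have := hbelow i; omega),
         fun i => show k i.castSucc + 1 ≤ n from hbelow i⟩
    · -- maps back
      intro p hp
      obtain ⟨hmem, hb⟩ := Finset.mem_filter.mp hp
      obtain ⟨m', k', hk'⟩ := p
      have hb' : ∀ i : Fin m', k' i + 1 ≤ n := fun i => hb i
      have hadm := snoc_adm hk' hb'
      rw [snocT, dif_pos hadm]
      refine Finset.mem_filter.mpr ⟨mem_Sfin.mpr ?_, ?_⟩
      · intro i
        show (Fin.snoc k' (n+1) : Fin (m'+1) → ℕ) i + 1 ≤ n + 2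
        rcases lt_or_ge (i : ℕ) m' with hi | hi
        · have hi' : (i : Fin (m'+1)) = Fin.castSucc ⟨i, hi⟩ := by ext; simp
          rw [hi', Fin.snoc_castSucc]
          have := hb' ⟨i, hi⟩; omega
        · have him : (i : ℕ) < m' + 1 := i.isLt
          have hi' : (i : Fin (m'+1)) = Fin.last m' := by
            ext; simp; omega
          rw [hi', Fin.snoc_last]
      · intro hcon
        have hc : (Fin.snoc k' (n+1) : Fin (m'+1) → ℕ) (Fin.last m') + 1 ≤ n + 1 :=
          hcon (Fin.last m')
        rw [Fin.snoc_last] at hc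
        omega
    · -- left inverse
      intro p hp
      obtain ⟨hmem, hnb⟩ := Finset.mem_filter.mp hp
      obtain ⟨m, k, hk, rfl, hlast, hbelow⟩ := top_struct (mem_Sfin.mp hmem) hnb
      rw [dropT_succ, snocT]
      have heq : (Fin.snoc (fun i : Fin m => k i.castSucc) (n+1) : Fin (m+1) → ℕ) = k := by
        funext i
        refine Fin.lastCases ?_ (fun j => ?_) i
        · rw [Fin.snoc_last, hlast]
        · rw [Fin.snoc_castSucc]
      have hcond : FAdm (m+1) (Fin.snoc (fun i : Fin m => k i.castSucc) (n+1) : Fin (m+1) → ℕ) := by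
        rw [heq]; exact hk
      rw [dif_pos hcond]
      exact tup_ext heq
    · -- right inverse
      intro p hp
      obtain ⟨hmem, hb⟩ := Finset.mem_filter.mp hp
      obtain ⟨m', k', hk'⟩ := p
      have hb' : ∀ i : Fin m', k' i + 1 ≤ n := fun i => hb i
      have hadm := snoc_adm hk' hb'
      rw [snocT, dif_pos hadm, dropT_succ]
      exact tup_ext (funext fun i => Fin.snoc_castSucc _ _ i)
    · -- values
      intro p hp
      obtain ⟨hmem, hnb⟩ := Finset.mem_filter.mp hp
      obtain ⟨m, k, hk, rfl, hlast, hbelow⟩ := top_struct (mem_Sfin.mp hmem) hnb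
      rw [dropT_succ]
      show (-1 : ℂ) ^ (m+1) * ∏ i : Fin (m+1), y2 (k i) * y2 (k i + 1)
        = -(x (n+1) * x (n+2) * ((-1 : ℂ) ^ m * ∏ i : Fin m,
            y0 (k i.castSucc) * y0 (k i.castSucc + 1)))
      rw [Fin.prod_univ_castSucc (fun i : Fin (m+1) => y2 (k i) * y2 (k i + 1))]
      have hprod : ∀ i : Fin m, y2 (k i.castSucc) * y2 (k i.castSucc + 1)
          = y0 (k i.castSucc) * y0 (k i.castSucc + 1) := fun i => by
        have := hbelow i
        rw [h20 _ (by omega), h20 _ (by omega)]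
      rw [Finset.prod_congr rfl (fun i _ => hprod i), hlast]
      have hx1 : y2 (n+1) = x (n+1) := by
        show (if n+1 ≤ n+2 then x (n+1) else 0) = x (n+1); rw [if_pos (by omega)]
      have hx2 : y2 (n+1+1) = x (n+2) := by
        show (if n+1+1 ≤ n+2 then x (n+1+1) else 0) = x (n+2); rw [if_pos (by omega)]
      rw [hx1, hx2]
      ring
  rw [part1, part2]
  ring

/-- 𝔉 of the finite segment (x_a, …, x_b); it equals 1 when the segment is empty (b = a-1)
and, by convention, 0 when b = a-2 (a segment of "length -1"). -/
noncomputable def Fseg (x : ℕ → ℂ) (a b : ℕ) : ℂ :=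
  if b + 1 < a then 0 else FcalFin (b + 1 - a) (fun j => x (j + a - 1))

/-- The classical Lommel polynomial
R_{n,ν}(x) = ∑_{k=0}^{⌊n/2⌋} (-1)^k C(n-k,k) (Γ(ν+n-k)/Γ(ν+k)) (2/x)^{n-2k}. -/
noncomputable def lommelR (n : ℕ) (ν : ℂ) (x : ℂ) : ℂ :=
  ∑ k ∈ Finset.range (n / 2 + 1),
    (-1 : ℂ) ^ k * (Nat.choose (n - k) k : ℂ) *
      (Complex.Gamma (ν + (n : ℂ) - (k : ℂ)) / Complex.Gamma (ν + (k : ℂ))) *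
      (2 / x) ^ (n - 2 * k)

noncomputable def aL (ν : ℂ) (n k : ℕ) : ℂ :=
  (-1 : ℂ) ^ k * (Nat.choose (n - k) k : ℂ) *
    (Complex.Gamma (ν + (n : ℂ) - (k : ℂ)) / Complex.Gamma (ν + (k : ℂ)))

variable {ν : ℂ}

lemma hne (hν : ∀ m : ℕ, ν ≠ -(m : ℂ)) (j : ℕ) : ν + (j : ℂ) ≠ 0 := fun h =>
  hν j (eq_neg_of_add_eq_zero_left h)

lemma hG (hν : ∀ m : ℕ, ν ≠ -(m : ℂ)) (j : ℕ) : Complex.Gamma (ν + (j : ℂ)) ≠ 0 := by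
  apply Complex.Gamma_ne_zero
  intro m h
  apply hν (m + j)
  push_cast
  linear_combination h

lemma GammaStep (hν : ∀ m : ℕ, ν ≠ -(m : ℂ)) (j : ℕ) :
    Complex.Gamma (ν + (j : ℂ) + 1) = (ν + (j : ℂ)) * Complex.Gamma (ν + (j : ℂ)) :=
  Complex.Gamma_add_one _ (hne hν j)

lemma aL_key (hν : ∀ m : ℕ, ν ≠ -(m : ℂ)) (n k : ℕ) (hk : 2 * (k + 1) ≤ n + 1) :
    aL ν (n+2) (k+1) = (ν + (n : ℂ) + 1) * aL ν (n+1) (k+1) - aL ν n k := by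
  have hkn : k ≤ n := by omega
  have h2k : 2 * k ≤ n := by omega
  set P := Complex.Gamma (ν + ((n - k : ℕ) : ℂ)) with hP
  set Q := Complex.Gamma (ν + (k : ℂ)) with hQ
  have hA : Complex.Gamma (ν + ((n+2 : ℕ) : ℂ) - ((k+1 : ℕ) : ℂ))
      = (ν + ((n - k : ℕ) : ℂ)) * P := by
    have harg : ν + ((n+2 : ℕ) : ℂ) - ((k+1 : ℕ) : ℂ) = (ν + ((n - k : ℕ) : ℂ)) + 1 := by
      push_cast [Nat.cast_sub hkn]; ring
    rw [harg, GammaStep hν]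
  have hB : Complex.Gamma (ν + ((n+1 : ℕ) : ℂ) - ((k+1 : ℕ) : ℂ)) = P := by
    have harg : ν + ((n+1 : ℕ) : ℂ) - ((k+1 : ℕ) : ℂ) = ν + ((n - k : ℕ) : ℂ) := by
      push_cast [Nat.cast_sub hkn]; ring
    rw [harg]
  have hC : Complex.Gamma (ν + (n : ℂ) - (k : ℂ)) = P := by
    have harg : ν + (n : ℂ) - (k : ℂ) = ν + ((n - k : ℕ) : ℂ) := by
      push_cast [Nat.cast_sub hkn]; ring
    rw [harg]
  have hD : Complex.Gamma (ν + ((k+1 : ℕ) : ℂ)) = (ν + (k : ℂ)) * Q := by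
    have harg : ν + ((k+1 : ℕ) : ℂ) = ν + (k : ℂ) + 1 := by push_cast; ring
    rw [harg, GammaStep hν]
  have hPa : ((Nat.choose (n + 2 - (k+1)) (k+1) : ℕ) : ℂ)
      = (Nat.choose (n + 1 - (k+1)) (k+1) : ℂ) + (Nat.choose (n - k) k : ℂ) := by
    have e1 : n + 2 - (k+1) = (n - k) + 1 := by omega
    have e2 : n + 1 - (k+1) = n - k := by omega
    rw [e1, e2]
    norm_cast
    rw [Nat.choose_succ_succ, Nat.add_comm]
  have hSt : ((k : ℂ) + 1) * (Nat.choose (n - k) (k+1) : ℂ)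
      = ((n : ℂ) - 2 * k) * (Nat.choose (n - k) k : ℂ) := by
    have h := Nat.choose_succ_right_eq (n - k) k
    have e3 : n - k - k = n - 2 * k := by omega
    rw [e3] at h
    have := congrArg (Nat.cast : ℕ → ℂ) h
    push_cast [Nat.cast_sub h2k] at this
    linear_combination this
  have e2' : n + 1 - (k + 1) = n - k := by omega
  have hw : ((n - k : ℕ) : ℂ) = (n : ℂ) - k := by push_cast [Nat.cast_sub hkn]; ring
  have main : (ν + ((n : ℂ) - k)) * ((Nat.choose (n - k) (k+1) : ℂ) + (Nat.choose (n - k) k : ℂ))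
      = (ν + (n : ℂ) + 1) * (Nat.choose (n - k) (k+1) : ℂ)
        + (ν + (k : ℂ)) * (Nat.choose (n - k) k : ℂ) := by
    linear_combination -hSt
  have hR : P / Q = (ν + (k : ℂ)) * (P / ((ν + (k : ℂ)) * Q)) := by
    rw [← mul_div_assoc, mul_div_mul_left P Q (hne hν k)]
  rw [aL, aL, aL, hA, hB, hC, hD, hPa, e2', hw, hR]
  linear_combination ((-1 : ℂ)^(k+1) * (P / ((ν + (k : ℂ)) * Q))) * main

lemma aL_zero {n k : ℕ} (h : n < 2 * k) : aL ν n k = 0 := by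
  have : n - k < k := by omega
  rw [aL, Nat.choose_eq_zero_of_lt this]
  simp

lemma lommelR_eq_sum {x : ℂ} (n M : ℕ) (hM : n / 2 + 1 ≤ M) :
    lommelR n ν x = ∑ k ∈ Finset.range M, aL ν n k * (2 / x) ^ (n - 2 * k) := by
  rw [lommelR]
  rw [Finset.sum_subset (Finset.range_subset_range.mpr hM)]
  · exact Finset.sum_congr rfl (fun k _ => by rw [aL])
  · intro k hk1 hk2
    rw [Finset.mem_range] at hk1 hk2
    rw [Nat.choose_eq_zero_of_lt (by omega : n - k < k)]
    simp

lemma aL_zero_case (hν : ∀ m : ℕ, ν ≠ -(m : ℂ)) (n : ℕ) :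
    aL ν (n+2) 0 = (ν + (n : ℂ) + 1) * aL ν (n+1) 0 := by
  rw [aL, aL]
  have harg : ν + ((n+2 : ℕ) : ℂ) - ((0:ℕ) : ℂ) = ν + ((n+1 : ℕ) : ℂ) + 1 := by
    push_cast; ring
  rw [harg, GammaStep hν (n+1)]
  simp [Nat.choose_zero_right]
  ring

lemma aL_mid (hν : ∀ m : ℕ, ν ≠ -(m : ℂ)) (n k : ℕ) (h : 2 * (k+1) = n + 2) :
    aL ν (n+2) (k+1) = - aL ν n k := by
  have hn : n = 2 * k := by omega
  subst hn
  rw [aL, aL]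
  have e1 : 2*k+2 - (k+1) = k+1 := by omega
  have e2 : 2*k - k = k := by omega
  rw [e1, e2, Nat.choose_self, Nat.choose_self]
  have harg1 : ν + ((2*k+2 : ℕ) : ℂ) - ((k+1 : ℕ) : ℂ) = ν + ((k+1 : ℕ) : ℂ) := by
    push_cast; ring
  have harg2 : ν + ((2*k : ℕ) : ℂ) - ((k : ℕ) : ℂ) = ν + ((k : ℕ) : ℂ) := by
    push_cast; ring
  rw [harg1, harg2, div_self (hG hν (k+1)), div_self (hG hν k)]
  simp [pow_succ]

lemma lommelR_rec (hν : ∀ m : ℕ, ν ≠ -(m : ℂ)) (x : ℂ) (n : ℕ) :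
    lommelR (n+2) ν x
      = 2 / x * (ν + (n : ℂ) + 1) * lommelR (n+1) ν x - lommelR n ν x := by
  set u : ℂ := 2 / x with hu
  rw [lommelR_eq_sum (n+2) (n+4) (by omega), lommelR_eq_sum (n+1) (n+4) (by omega),
      lommelR_eq_sum n (n+4) (by omega)]
  have h3 : ∑ k ∈ Finset.range (n+4), aL ν n k * u ^ (n - 2*k)
      = ∑ k ∈ Finset.range (n+4),
          (if k = 0 then 0 else aL ν n (k-1) * u ^ (n - 2*(k-1))) := by
    rw [Finset.sum_range_succ (fun k => aL ν n k * u ^ (n - 2*k)) (n+3),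
        Finset.sum_range_succ'
          (fun k => if k = 0 then (0:ℂ) else aL ν n (k-1) * u ^ (n - 2*(k-1))) (n+3),
        aL_zero (by omega : n < 2*(n+3))]
    simp [Nat.add_sub_cancel]
  rw [h3, Finset.mul_sum, ← Finset.sum_sub_distrib]
  apply Finset.sum_congr rfl
  intro k _
  rcases k with _ | k
  · rw [if_pos rfl, sub_zero, aL_zero_case hν n,
        show n+2-2*0 = (n+1-2*0)+1 from by omega, pow_succ]
    ring
  · rw [if_neg (Nat.succ_ne_zero k)]
    simp only [Nat.add_sub_cancel]
    by_cases h1 : 2*(k+1) ≤ n+1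
    · have eT : n - 2*k = n + 2 - 2*(k+1) := by omega
      have eE : n + 2 - 2*(k+1) = (n + 1 - 2*(k+1)) + 1 := by omega
      rw [aL_key hν n k h1, eT, eE, pow_succ]
      ring
    · by_cases h2 : 2*(k+1) = n+2
      · have hm1 : aL ν (n+1) (k+1) = 0 := aL_zero (by omega)
        have e0 : n + 2 - 2*(k+1) = 0 := by omega
        have e0' : n - 2*k = 0 := by omega
        rw [hm1, e0, e0', pow_zero, aL_mid hν n k h2]
        ring
      · rw [aL_zero (show n+2 < 2*(k+1) by omega),
            aL_zero (show n+1 < 2*(k+1) by omega),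
            aL_zero (show n < 2*k by omega)]
        ring

/-- R_{n,ν}(x) = (2/x)^n (Γ(ν+n)/Γ(ν)) 𝔉({x/(2(ν+k))}_{k=0}^{n-1}). -/
theorem stmt_7 (n : ℕ) (ν : ℂ) (hν : ∀ m : ℕ, ν ≠ -(m : ℂ)) (x : ℂ) (hx : x ≠ 0) :
    lommelR n ν x = (2 / x) ^ n * (Complex.Gamma (ν + n) / Complex.Gamma ν) *
      FcalFin n (fun j => x / (2 * (ν + (j : ℂ) - 1))) := by
  have H : ∀ m : ℕ, lommelR m ν x
      = (2 / x) ^ m * (Complex.Gamma (ν + (m : ℂ)) / Complex.Gamma ν) *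
        FcalFin m (fun j => x / (2 * (ν + (j : ℂ) - 1))) := by
    intro m
    induction m using Nat.twoStepInduction with
    | zero =>
      rw [FcalFin_zero, lommelR]
      simp
    | one =>
      rw [FcalFin_one, lommelR]
      simp [Finset.sum_range_one]
      ring
    | more m ih1 ih2 =>
      have hc1 : ((m + 1 : ℕ) : ℂ) = (m : ℂ) + 1 := by push_cast; ring
      have hc2 : ((m + 2 : ℕ) : ℂ) = (m : ℂ) + 2 := by push_cast; ring
      have hA : ν + (m : ℂ) ≠ 0 := hne hν m
      have hB : ν + (m : ℂ) + 1 ≠ 0 := by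
        have h := hne hν (m + 1)
        rw [hc1] at h
        rw [add_assoc]
        exact h
      have hGν : Complex.Gamma ν ≠ 0 := by simpa using hG hν 0
      have hGm : Complex.Gamma (ν + (m : ℂ)) ≠ 0 := hG hν m
      have hGa : Complex.Gamma (ν + ((m + 1 : ℕ) : ℂ))
          = (ν + (m : ℂ)) * Complex.Gamma (ν + (m : ℂ)) := by
        rw [show ν + ((m + 1 : ℕ) : ℂ) = ν + (m : ℂ) + 1 by push_cast; ring, GammaStep hν m]
      have hGb : Complex.Gamma (ν + ((m + 2 : ℕ) : ℂ))
          = (ν + (m : ℂ) + 1) * ((ν + (m : ℂ)) * Complex.Gamma (ν + (m : ℂ))) := by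
        rw [show ν + ((m + 2 : ℕ) : ℂ) = ν + ((m + 1 : ℕ) : ℂ) + 1 by push_cast; ring,
          GammaStep hν (m + 1), hGa, hc1]
        ring
      rw [lommelR_rec hν x m, ih1, ih2, FcalFin_rec m (fun j => x / (2 * (ν + (j : ℂ) - 1))),
        hGa, hGb]
      simp only [hc1, hc2]
      have hd1 : ν + ((m : ℂ) + 1) - 1 = ν + (m : ℂ) := by ring
      have hd2 : ν + ((m : ℂ) + 2) - 1 = ν + (m : ℂ) + 1 := by ring
      rw [hd1, hd2, pow_succ (2/x) (m+1), pow_succ (2/x) m]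
      set z := (2/x : ℂ) ^ m with hz
      set F1 := FcalFin (m + 1) (fun j => x / (2 * (ν + (j : ℂ) - 1))) with hF1
      set F0 := FcalFin m (fun j => x / (2 * (ν + (j : ℂ) - 1))) with hF0
      field_simp
  exact H n
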